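/- arXiv:2507.10289 — 3 statements merged into one kernel-verified Lean document; each statement's English description precedes it below -/
import Mathlib

section
/- A map A : F^d → F^d is both a Poincaré similarity and a Galilean similarity if and only if A is a trivial Euclidean similarity. -/
namespace Spacetimes

open Finset

variable {F : Type*} [Field F] [LinearOrder F] [IsStrictOrderedRing F] {d : ℕ}

/-- The Euclidean scalar product on `Fin d → F`. -/
def euclProd (p q : Fin d → F) : F := ∑ i, p i * q i

/-- The Minkowski product on `Fin d → F`; index `0` is the time coordinate. -/
def minkProd [NeZero d] (p q : Fin d → F) : F :=
  p 0 * q 0 - ∑ i ∈ Finset.univ.erase (0 : Fin d), p i * q i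

/-- The squared distance function associated to a product `B`. -/
def sqDist (B : (Fin d → F) → (Fin d → F) → F) (p q : Fin d → F) : F :=
  B (p - q) (p - q)

/-- An affine transformation: a linear bijection composed with a translation. -/
def IsAffine (A : (Fin d → F) → (Fin d → F)) : Prop :=
  ∃ (L : (Fin d → F) ≃ₗ[F] (Fin d → F)) (t : Fin d → F), ∀ p, A p = L p + t

/-- A Euclidean similarity: an affine transformation scaling squared
Euclidean distances by a constant factor. -/
def EuclSim (A : (Fin d → F) → (Fin d → F)) : Prop :=
  IsAffine A ∧ ∃ a : F, ∀ p q : Fin d → F,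
    sqDist euclProd (A p) (A q) = a * sqDist euclProd p q

/-- A Poincaré similarity: an affine transformation scaling squared
Minkowski distances by a constant factor. -/
def PoiSim [NeZero d] (A : (Fin d → F) → (Fin d → F)) : Prop :=
  IsAffine A ∧ ∃ a : F, ∀ p q : Fin d → F,
    sqDist minkProd (A p) (A q) = a * sqDist minkProd p q

/-- A Galilean similarity. -/
def GalSim [NeZero d] (A : (Fin d → F) → (Fin d → F)) : Prop :=
  IsAffine A ∧ ∃ a : F, ∀ p q : Fin d → F, p 0 = q 0 →
    A p 0 = A q 0 ∧ sqDist euclProd (A p) (A q) = a * sqDist euclProd p q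

/-- A map respects a binary relation. -/
def Respects2 {α : Type*} (f : α → α) (R : α → α → Prop) : Prop :=
  ∀ p q, R p q ↔ R (f p) (f q)

/-- A map respects a ternary relation. -/
def Respects3 {α : Type*} (f : α → α) (R : α → α → α → Prop) : Prop :=
  ∀ p q r, R p q r ↔ R (f p) (f q) (f r)

/-- A map respects a 4-ary relation. -/
def Respects4 {α : Type*} (f : α → α) (R : α → α → α → α → Prop) : Prop :=
  ∀ p q r s, R p q r s ↔ R (f p) (f q) (f r) (f s)

/-- Absolute simultaneity. -/
def SimRel [NeZero d] (p q : Fin d → F) : Prop := p 0 = q 0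

/-- Being at rest (same spatial components). -/
def RestRel [NeZero d] (p q : Fin d → F) : Prop := ∀ i, i ≠ 0 → p i = q i

/-- A trivial Euclidean similarity: a Euclidean similarity respecting `RestRel`. -/
def TrivEuclSim [NeZero d] (A : (Fin d → F) → (Fin d → F)) : Prop :=
  EuclSim A ∧ Respects2 A RestRel

/-- A trivial Galilean similarity: a Galilean similarity respecting `RestRel`. -/
def TrivGalSim [NeZero d] (A : (Fin d → F) → (Fin d → F)) : Prop :=
  GalSim A ∧ Respects2 A RestRel

/-- Betweenness. -/
def Bw (p q r : Fin d → F) : Prop :=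
  ∃ l : F, 0 ≤ l ∧ l ≤ 1 ∧ q = p + l • (r - p)

/-- Lightlike relatedness. -/
def Light [NeZero d] (p q : Fin d → F) : Prop :=
  (p 0 - q 0) ^ 2 = ∑ i ∈ Finset.univ.erase (0 : Fin d), (p i - q i) ^ 2

/-- Euclidean congruence of segments. -/
def CongE (p q r s : Fin d → F) : Prop :=
  sqDist euclProd p q = sqDist euclProd r s

/-- Minkowski congruence of segments. -/
def CongM [NeZero d] (p q r s : Fin d → F) : Prop :=
  sqDist minkProd p q = sqDist minkProd r s

/-- Congruence on simultaneity. -/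
def CongS [NeZero d] (p q r s : Fin d → F) : Prop :=
  CongE p q r s ∧ SimRel p q ∧ SimRel r s

/-- The time axis. -/
def timeAxis (F : Type*) [Field F] [LinearOrder F] [IsStrictOrderedRing F] (d : ℕ) [NeZero d] :
    Set (Fin d → F) := {p | ∀ i, i ≠ 0 → p i = 0}

/-- The simultaneity at the origin. -/
def simul0 (F : Type*) [Field F] [LinearOrder F] [IsStrictOrderedRing F] (d : ℕ) [NeZero d] :
    Set (Fin d → F) := {p | p 0 = 0}

/-- The `i`-th standard unit vector. -/
def unitVec (F : Type*) [Field F] [LinearOrder F] [IsStrictOrderedRing F] {d : ℕ} (i : Fin d) : Fin d → F :=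
  Pi.single i 1

/-! ### Auxiliary lemmas -/

lemma mink_eq [NeZero d] (v w : Fin d → F) :
    minkProd v w = 2 * (v 0 * w 0) - euclProd v w := by
  unfold minkProd euclProd
  rw [← Finset.sum_erase_add _ _ (Finset.mem_univ (0 : Fin d))]
  ring

lemma eucl_nonneg (v : Fin d → F) : 0 ≤ euclProd v v :=
  Finset.sum_nonneg fun i _ => mul_self_nonneg _

lemma eucl_eq_zero {v : Fin d → F} (h : euclProd v v = 0) : v = 0 := by
  funext i
  have := (Finset.sum_eq_zero_iff_of_nonneg
    (fun i _ => mul_self_nonneg (v i))).mp h i (Finset.mem_univ i)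
  exact mul_self_eq_zero.mp this

lemma eucl_add (u v : Fin d → F) :
    euclProd (u + v) (u + v) = euclProd u u + 2 * euclProd u v + euclProd v v := by
  unfold euclProd
  simp only [Pi.add_apply]
  rw [Finset.mul_sum, ← Finset.sum_add_distrib, ← Finset.sum_add_distrib]
  exact Finset.sum_congr rfl fun i _ => by ring

lemma eucl_add_left (u v x : Fin d → F) :
    euclProd (u + v) x = euclProd u x + euclProd v x := by
  unfold euclProd
  rw [← Finset.sum_add_distrib]
  exact Finset.sum_congr rfl fun i _ => by simp [add_mul]

lemma eucl_smul_left (c : F) (u v : Fin d → F) :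
    euclProd (c • u) v = c * euclProd u v := by
  unfold euclProd
  rw [Finset.mul_sum]
  exact Finset.sum_congr rfl fun i _ => by simp [mul_assoc]

lemma eucl_comm (u v : Fin d → F) : euclProd u v = euclProd v u :=
  Finset.sum_congr rfl fun i _ => mul_comm _ _

lemma eucl_single_left [NeZero d] (j : Fin d) (v : Fin d → F) :
    euclProd (Pi.single j (1:F)) v = v j := by
  unfold euclProd
  simp [Pi.single_apply]

lemma eucl_single_self [NeZero d] (j : Fin d) :
    euclProd (Pi.single j (1:F)) (Pi.single j (1:F)) = 1 := by
  rw [eucl_single_left, Pi.single_eq_same]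

def spart [NeZero d] (v : Fin d → F) : Fin d → F := fun i => if i = 0 then 0 else v i

lemma spart_zero [NeZero d] (v : Fin d → F) : spart v 0 = 0 := if_pos rfl

lemma spart_decomp [NeZero d] (v : Fin d → F) :
    v = v 0 • (Pi.single (0 : Fin d) (1:F) : Fin d → F) + spart v := by
  funext i
  by_cases h : i = 0 <;> simp [spart, h, Pi.single_apply]

lemma eucl_spart [NeZero d] (v : Fin d → F) :
    euclProd v v = v 0 * v 0 + euclProd (spart v) (spart v) := by
  unfold euclProd
  rw [← Finset.sum_erase_add _ _ (Finset.mem_univ (0 : Fin d))]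
  rw [← Finset.sum_erase_add _ (fun i => spart v i * spart v i) (Finset.mem_univ (0 : Fin d))]
  rw [spart_zero]
  have h : ∑ i ∈ Finset.univ.erase (0 : Fin d), spart v i * spart v i
      = ∑ i ∈ Finset.univ.erase (0 : Fin d), v i * v i :=
    Finset.sum_congr rfl fun i hi => by
      simp [spart, Finset.ne_of_mem_erase hi]
  rw [h]; ring

lemma eucl_polar {L : (Fin d → F) ≃ₗ[F] (Fin d → F)} {a : F}
    (h : ∀ v, euclProd (L v) (L v) = a * euclProd v v) (u v : Fin d → F) :
    euclProd (L u) (L v) = a * euclProd u v := by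
  have h1 := h u; have h2 := h v; have h3 := h (u + v)
  rw [map_add, eucl_add, eucl_add] at h3
  linear_combination (h3 - h1 - h2) / 2

lemma mink_polar [NeZero d] {L : (Fin d → F) ≃ₗ[F] (Fin d → F)} {a : F}
    (h : ∀ v : Fin d → F, 2 * (L v 0 * L v 0) - euclProd (L v) (L v)
      = a * (2 * (v 0 * v 0) - euclProd v v)) (u v : Fin d → F) :
    2 * (L u 0 * L v 0) - euclProd (L u) (L v)
      = a * (2 * (u 0 * v 0) - euclProd u v) := by
  have h1 := h u; have h2 := h v; have h3 := h (u + v)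
  rw [map_add, eucl_add, eucl_add] at h3
  simp only [Pi.add_apply] at h3
  linear_combination (h3 - h1 - h2) / 2

lemma forward_aux [NeZero d] (hd : 2 ≤ d) (A : (Fin d → F) → (Fin d → F))
    (hP : PoiSim A) (hG : GalSim A) : TrivEuclSim A := by
  obtain ⟨⟨L, t, hA⟩, a, ha⟩ := hP
  obtain ⟨-, b, hb⟩ := hG
  have hsub : ∀ p q, A p - A q = L (p - q) := by
    intro p q; rw [hA, hA, map_sub]; abel
  -- pointwise Minkowski condition
  have hM : ∀ v : Fin d → F, 2 * (L v 0 * L v 0) - euclProd (L v) (L v)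
      = a * (2 * (v 0 * v 0) - euclProd v v) := by
    intro v
    have h := ha v 0
    unfold sqDist at h
    rw [hsub, sub_zero, mink_eq, mink_eq] at h
    exact h
  -- Galilean pointwise condition
  have hGal : ∀ v : Fin d → F, v 0 = 0 →
      L v 0 = 0 ∧ euclProd (L v) (L v) = b * euclProd v v := by
    intro v hv
    obtain ⟨h1, h2⟩ := hb v 0 (by simpa using hv)
    constructor
    · have h3 : (A v - A 0) 0 = L (v - 0) 0 := congrFun (hsub v 0) 0
      rw [sub_zero] at h3
      rw [Pi.sub_apply, h1, sub_self] at h3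
      exact h3.symm
    · unfold sqDist at h2
      rw [hsub, sub_zero] at h2
      exact h2
  -- the spatial unit vector e1
  have h1d : (1 : ℕ) < d := lt_of_lt_of_le one_lt_two hd
  have hj1 : (⟨1, h1d⟩ : Fin d) ≠ 0 := by simp [Fin.ext_iff]
  have he1_0 : (Pi.single (⟨1, h1d⟩ : Fin d) (1:F) : Fin d → F) 0 = 0 :=
    Pi.single_eq_of_ne (Ne.symm hj1) _
  have he1_ne : (Pi.single (⟨1, h1d⟩ : Fin d) (1:F) : Fin d → F) ≠ 0 := by
    intro h
    have := congrFun h ⟨1, h1d⟩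
    simp [Pi.single_eq_same] at this
  have hg1 := hGal _ he1_0
  have hQL : euclProd (L (Pi.single (⟨1, h1d⟩ : Fin d) (1:F))) (L (Pi.single (⟨1, h1d⟩ : Fin d) (1:F))) = a := by
    have hm1 := hM (Pi.single (⟨1, h1d⟩ : Fin d) (1:F))
    rw [hg1.1, he1_0, eucl_single_self] at hm1
    linarith
  have hba : b = a := by
    have h2 := hg1.2
    rw [eucl_single_self, mul_one, hQL] at h2
    exact h2.symm
  have ha_pos : 0 < a := by
    rcases (hQL ▸ eucl_nonneg (L (Pi.single (⟨1, h1d⟩ : Fin d) (1:F)))).lt_or_eq with h | h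
    · exact h
    · exfalso
      exact he1_ne (L.map_eq_zero_iff.mp (eucl_eq_zero (by rw [hQL, ← h])))
  -- time axis image: make α and w opaque
  have he0_0 : (Pi.single (0 : Fin d) (1:F) : Fin d → F) 0 = 1 := Pi.single_eq_same _ _
  obtain ⟨α, hα⟩ : ∃ c : F, L (Pi.single (0 : Fin d) (1:F)) 0 = c := ⟨_, rfl⟩
  obtain ⟨w, hwdef⟩ : ∃ w : Fin d → F, spart (L (Pi.single (0 : Fin d) (1:F))) = w := ⟨_, rfl⟩
  have hw0 : w 0 = 0 := by rw [← hwdef]; exact spart_zero _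
  have hLe0 : L (Pi.single (0 : Fin d) (1:F))
      = α • (Pi.single (0 : Fin d) (1:F) : Fin d → F) + w := by
    rw [← hα, ← hwdef]; exact spart_decomp _
  have hαw : α * α - euclProd w w = a := by
    have hm0 := hM (Pi.single (0 : Fin d) (1:F))
    rw [eucl_spart (L (Pi.single (0 : Fin d) (1:F))), he0_0, eucl_single_self, hα, hwdef] at hm0
    linarith
  have hαne : α ≠ 0 := by
    intro h
    rw [h] at hαw
    have := eucl_nonneg w
    linarith
  -- show w = 0
  have hz : L (L.symm w) = w := L.apply_symm_apply _
  have hz0 : (L.symm w) 0 = 0 := by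
    have hdec : L (L.symm w) = (L.symm w) 0 • L (Pi.single (0 : Fin d) (1:F)) + L (spart (L.symm w)) := by
      calc L (L.symm w) = L ((L.symm w) 0 • (Pi.single (0 : Fin d) (1:F) : Fin d → F) + spart (L.symm w)) := by
            rw [← spart_decomp (L.symm w)]
        _ = _ := by rw [map_add, map_smul]
    have h := congrFun hdec 0
    rw [hz] at h
    simp only [Pi.add_apply, Pi.smul_apply, smul_eq_mul] at h
    rw [hw0, hα, (hGal (spart (L.symm w)) (spart_zero _)).1, add_zero] at h
    exact (mul_eq_zero.mp h.symm).resolve_right hαne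
  have hQw : euclProd w w = 0 := by
    have hBz := mink_polar hM (Pi.single (0 : Fin d) (1:F)) (L.symm w)
    rw [hz, hz0, he0_0, eucl_single_left, hz0, hα, hLe0, eucl_add_left, eucl_smul_left,
      eucl_single_left, hw0] at hBz
    linarith
  have hLe0' : L (Pi.single (0 : Fin d) (1:F))
      = α • (Pi.single (0 : Fin d) (1:F) : Fin d → F) := by
    rw [hLe0, eucl_eq_zero hQw, add_zero]
  have hαsq : α * α = a := by rw [hQw] at hαw; linarith
  -- Euclidean scaling
  have hE : ∀ v : Fin d → F, euclProd (L v) (L v) = a * euclProd v v := by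
    intro v
    have hs := hGal (spart v) (spart_zero v)
    have hLv : L v = (v 0 * α) • (Pi.single (0 : Fin d) (1:F) : Fin d → F) + L (spart v) := by
      calc L v = L (v 0 • (Pi.single (0 : Fin d) (1:F) : Fin d → F) + spart v) := by
            rw [← spart_decomp v]
        _ = v 0 • (α • (Pi.single (0 : Fin d) (1:F) : Fin d → F)) + L (spart v) := by
            rw [map_add, map_smul, hLe0']
        _ = _ := by rw [smul_smul]
    rw [hLv, eucl_add]
    have hcross : euclProd ((v 0 * α) • (Pi.single (0 : Fin d) (1:F) : Fin d → F)) (L (spart v))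
        = (v 0 * α) * (L (spart v) 0) := by
      rw [eucl_smul_left, eucl_single_left]
    have hself : euclProd ((v 0 * α) • (Pi.single (0 : Fin d) (1:F) : Fin d → F))
        ((v 0 * α) • (Pi.single (0 : Fin d) (1:F) : Fin d → F))
        = (v 0 * α) * (v 0 * α) := by
      rw [eucl_smul_left, eucl_comm, eucl_smul_left, eucl_single_self]; ring
    rw [hcross, hself, hs.1, hs.2, hba, eucl_spart v]
    linear_combination (v 0 * v 0) * hαsq
  -- key lemma for RestRel
  have hkey : ∀ v : Fin d → F, (∀ i, i ≠ 0 → v i = 0) ↔ (∀ i, i ≠ 0 → L v i = 0) := by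
    intro v
    constructor
    · intro h
      have hv : v = v 0 • (Pi.single (0 : Fin d) (1:F) : Fin d → F) := by
        funext i
        by_cases hi : i = 0
        · subst hi; simp [Pi.single_eq_same]
        · rw [h i hi]; simp [Pi.single_eq_of_ne hi]
      intro i hi
      rw [hv, map_smul, hLe0']
      simp [Pi.single_eq_of_ne hi]
    · intro h i hi
      have hLv : L v = L v 0 • (Pi.single (0 : Fin d) (1:F) : Fin d → F) := by
        funext j
        by_cases hj : j = 0
        · subst hj; simp [Pi.single_eq_same]
        · rw [h j hj]; simp [Pi.single_eq_of_ne hj]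
      have hsymm : L.symm (Pi.single (0 : Fin d) (1:F) : Fin d → F)
          = α⁻¹ • (Pi.single (0 : Fin d) (1:F) : Fin d → F) := by
        rw [LinearEquiv.symm_apply_eq, map_smul, hLe0', smul_smul,
          inv_mul_cancel₀ hαne, one_smul]
      have hv : v = L v 0 • (α⁻¹ • (Pi.single (0 : Fin d) (1:F) : Fin d → F)) := by
        conv_lhs => rw [← L.symm_apply_apply v]
        rw [hLv, map_smul, hsymm]
        simp [Pi.single_eq_same]
      rw [hv]
      simp [Pi.single_eq_of_ne hi]
  refine ⟨⟨⟨L, t, hA⟩, a, fun p q => ?_⟩, fun p q => ?_⟩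
  · unfold sqDist
    rw [hsub]
    exact hE _
  · unfold RestRel
    have hc : ∀ i : Fin d, (A p i = A q i) ↔ L (p - q) i = 0 := by
      intro i
      rw [← congrFun (hsub p q) i, Pi.sub_apply, sub_eq_zero]
    constructor
    · intro h i hi
      rw [hc i]
      exact (hkey (p - q)).mp (fun j hj => by rw [Pi.sub_apply, h j hj, sub_self]) i hi
    · intro h i hi
      have hres := (hkey (p - q)).mpr (fun j hj => (hc j).mp (h j hj)) i hi
      rw [Pi.sub_apply, sub_eq_zero] at hres
      exact hres
lemma backward_aux [NeZero d] (A : (Fin d → F) → (Fin d → F))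
    (hT : TrivEuclSim A) : PoiSim A ∧ GalSim A := by
  obtain ⟨⟨⟨L, t, hA⟩, a, ha⟩, hR⟩ := hT
  have hsub : ∀ p q, A p - A q = L (p - q) := by
    intro p q; rw [hA, hA, map_sub]; abel
  have hE : ∀ v : Fin d → F, euclProd (L v) (L v) = a * euclProd v v := by
    intro v
    have h := ha v 0
    unfold sqDist at h
    rw [hsub, sub_zero] at h
    exact h
  have he0_0 : (Pi.single (0 : Fin d) (1:F) : Fin d → F) 0 = 1 := Pi.single_eq_same _ _
  -- L fixes the time axis
  obtain ⟨α, hα⟩ : ∃ c : F, L (Pi.single (0 : Fin d) (1:F)) 0 = c := ⟨_, rfl⟩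
  have hLe0 : L (Pi.single (0 : Fin d) (1:F))
      = α • (Pi.single (0 : Fin d) (1:F) : Fin d → F) := by
    have hrest : ∀ i, i ≠ 0 → A (Pi.single (0 : Fin d) (1:F)) i = A 0 i := by
      have h := (hR (Pi.single (0 : Fin d) (1:F)) 0).mp
        (fun i hi => by simp [Pi.single_eq_of_ne hi])
      exact h
    funext i
    by_cases hi : i = 0
    · subst hi; simp [Pi.single_eq_same, hα]
    · have h1 : L (Pi.single (0 : Fin d) (1:F) - 0) i = 0 := by
        rw [← congrFun (hsub (Pi.single (0 : Fin d) (1:F)) 0) i, Pi.sub_apply,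
          hrest i hi, sub_self]
      rw [sub_zero] at h1
      rw [h1]
      simp [Pi.single_eq_of_ne hi]
  have hαsq : α * α = a := by
    have h := hE (Pi.single (0 : Fin d) (1:F))
    rw [hLe0, eucl_smul_left, eucl_comm, eucl_smul_left, eucl_single_self] at h
    linarith
  have he0_ne : (Pi.single (0 : Fin d) (1:F) : Fin d → F) ≠ 0 := by
    intro h
    have := congrFun h 0
    rw [he0_0] at this
    simp at this
  have hαne : α ≠ 0 := by
    intro h
    rw [h, zero_smul] at hLe0
    exact he0_ne (L.map_eq_zero_iff.mp hLe0)
  have hEp := eucl_polar hE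
  have hLv0 : ∀ v : Fin d → F, L v 0 = α * v 0 := by
    intro v
    have h := hEp v (Pi.single (0 : Fin d) (1:F))
    rw [hLe0, eucl_comm, eucl_smul_left, eucl_single_left] at h
    rw [eucl_comm, eucl_single_left] at h
    have h2 : α * L v 0 = α * (α * v 0) := by
      rw [h, ← hαsq]; ring
    exact mul_left_cancel₀ hαne h2
  constructor
  · refine ⟨⟨L, t, hA⟩, a, fun p q => ?_⟩
    unfold sqDist
    rw [hsub, mink_eq, mink_eq, hLv0]
    linear_combination 2 * ((p - q) 0 * (p - q) 0) * hαsq - hE (p - q)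
  · refine ⟨⟨L, t, hA⟩, a, fun p q hpq => ⟨?_, ha p q⟩⟩
    have h1 : L (p - q) 0 = 0 := by
      rw [hLv0, Pi.sub_apply, hpq, sub_self, mul_zero]
    have h2 := congrFun (hsub p q) 0
    rw [Pi.sub_apply, h1, sub_eq_zero] at h2
    exact h2
/-- the maps that are both Poincaré and Galilean similarities
are exactly the trivial Euclidean similarities. -/
theorem poiSim_and_galSim_iff_trivEuclSim [NeZero d] (hd : 2 ≤ d)
    (A : (Fin d → F) → (Fin d → F)) :
    (PoiSim A ∧ GalSim A) ↔ TrivEuclSim A := by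
  constructor
  · exact fun h => forward_aux hd A h.1 h.2
  · exact fun h => backward_aux A h

end Spacetimes
end

section
/- A map A : F^d → F^d is both a Euclidean similarity and a Galilean similarity if and only if A is a trivial Euclidean similarity. -/
section Aux
namespace Spacetimes
variable {F : Type*} [Field F] [LinearOrder F] [IsStrictOrderedRing F] {d : ℕ}

lemma euclProd_comm (p q : Fin d → F) : euclProd p q = euclProd q p := by
  simp [euclProd, mul_comm]

lemma euclProd_add_add (x y : Fin d → F) :
    euclProd (x + y) (x + y)
      = euclProd x x + 2 * euclProd x y + euclProd y y := by
  simp only [euclProd, Pi.add_apply, Finset.mul_sum, ← Finset.sum_add_distrib]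
  exact Finset.sum_congr rfl fun i _ => by ring

lemma euclProd_single (v : Fin d → F) (i : Fin d) :
    euclProd v (Pi.single i 1) = v i := by
  simp [euclProd, Pi.single_apply, mul_ite, Finset.sum_ite_eq']

lemma euclProd_smul_right (c : F) (p q : Fin d → F) :
    euclProd p (c • q) = c * euclProd p q := by
  simp only [euclProd, Pi.smul_apply, smul_eq_mul, Finset.mul_sum]
  exact Finset.sum_congr rfl fun i _ => by ring

lemma polar (f : (Fin d → F) → (Fin d → F))
    (hadd : ∀ v w, f (v + w) = f v + f w) (a : F)
    (h : ∀ v, euclProd (f v) (f v) = a * euclProd v v) (v w : Fin d → F) :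
    euclProd (f v) (f w) = a * euclProd v w := by
  have h1 := h (v + w)
  rw [hadd, euclProd_add_add, euclProd_add_add, h v, h w] at h1
  linarith [h1]

variable [NeZero d]

lemma restrict_surj (L : (Fin d → F) ≃ₗ[F] (Fin d → F))
    (hS : ∀ v : Fin d → F, v 0 = 0 → L v 0 = 0) (w : Fin d → F) (hw : w 0 = 0) :
    ∃ v : Fin d → F, v 0 = 0 ∧ L v = w := by
  set S : Submodule F (Fin d → F) :=
    LinearMap.ker (LinearMap.proj (R := F) (φ := fun _ : Fin d => F) 0) with hSdef
  have hmem : ∀ x : Fin d → F, x ∈ S ↔ x 0 = 0 := by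
    intro x; simp [hSdef, LinearMap.mem_ker]
  have hmap : ∀ x ∈ S, (L : (Fin d → F) →ₗ[F] (Fin d → F)) x ∈ S := by
    intro x hx; rw [hmem] at hx ⊢; exact hS x hx
  let L' := (L : (Fin d → F) →ₗ[F] (Fin d → F)).restrict hmap
  have hinj : Function.Injective L' := by
    intro x y hxy
    apply Subtype.ext
    apply L.injective
    exact congrArg Subtype.val hxy
  have hsurj : Function.Surjective L' := (LinearMap.injective_iff_surjective).mp hinj
  obtain ⟨⟨v, hv⟩, hveq⟩ := hsurj ⟨w, (hmem w).2 hw⟩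
  refine ⟨v, (hmem v).1 hv, ?_⟩
  have := congrArg Subtype.val hveq
  simpa [L', LinearMap.restrict_apply] using this

lemma respects_of_single (L : (Fin d → F) ≃ₗ[F] (Fin d → F))
    (hu : ∀ i : Fin d, i ≠ 0 → L (Pi.single 0 1) i = 0) (v : Fin d → F) :
    (∀ i, i ≠ 0 → v i = 0) ↔ (∀ i, i ≠ 0 → L v i = 0) := by
  have hu0 : L (Pi.single 0 1) 0 ≠ 0 := by
    intro h0
    have hu' : L (Pi.single 0 1 : Fin d → F) = 0 := by
      funext j
      by_cases hj : j = 0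
      · subst hj; exact h0
      · exact hu j hj
    have he : (Pi.single 0 1 : Fin d → F) = 0 := by
      apply L.injective; simpa using hu'
    have := congrFun he 0
    simp [Pi.single_apply] at this
  constructor
  · intro hv i hi
    have hveq : v = v 0 • (Pi.single 0 1 : Fin d → F) := by
      funext j
      by_cases hj : j = 0
      · subst hj; simp
      · simp [Pi.single_apply, hj, hv j hj]
    rw [hveq, map_smul]
    simp [hu i hi]
  · intro hv i hi
    have hLv : L v = ((L v 0) * (L (Pi.single 0 1 : Fin d → F) 0)⁻¹) •
        L (Pi.single 0 1 : Fin d → F) := by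
      funext j
      by_cases hj : j = 0
      · subst hj
        simp only [Pi.smul_apply, smul_eq_mul]
        rw [mul_assoc, inv_mul_cancel₀ hu0, mul_one]
      · simp [hv j hj, hu j hj]
    have hveq : v = ((L v 0) * (L (Pi.single 0 1 : Fin d → F) 0)⁻¹) •
        (Pi.single 0 1 : Fin d → F) := by
      apply L.injective
      rw [map_smul]; exact hLv
    rw [hveq]
    simp [Pi.single_apply, hi]

end Spacetimes
end Aux

section Main
namespace Spacetimes
variable {F : Type*} [Field F] [LinearOrder F] [IsStrictOrderedRing F] {d : ℕ}

theorem euclSim_and_galSim_iff_trivEuclSim' [NeZero d] (hd : 2 ≤ d)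
    (A : (Fin d → F) → (Fin d → F)) :
    (EuclSim A ∧ GalSim A) ↔ TrivEuclSim A := by
  constructor
  · rintro ⟨hE, hG⟩
    refine ⟨hE, ?_⟩
    obtain ⟨⟨L, t, hA⟩, a, ha⟩ := hE
    obtain ⟨-, b, hb⟩ := hG
    have hdiff : ∀ p q : Fin d → F, A p - A q = L (p - q) := by
      intro p q; rw [hA, hA, map_sub]; abel
    have hQ : ∀ v : Fin d → F, euclProd (L v) (L v) = a * euclProd v v := by
      intro v
      have h := ha v 0
      simpa [sqDist, hdiff v 0] using h
    have hpol := polar (fun v => L v) (fun v w => by simp only [map_add]) a hQ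
    have hS : ∀ v : Fin d → F, v 0 = 0 → L v 0 = 0 := by
      intro v hv
      have h0 : A v 0 = A 0 0 := (hb v 0 (by simpa using hv)).1
      have h2 : (A v - A 0) 0 = 0 := by simp [h0]
      rw [hdiff v 0] at h2; simpa using h2
    have hu : ∀ i : Fin d, i ≠ 0 → L (Pi.single 0 1 : Fin d → F) i = 0 := by
      intro i hi
      obtain ⟨w, hw0, hLw⟩ := restrict_surj L hS (Pi.single i 1)
        (by simp [Pi.single_apply, Ne.symm hi])
      have h1 := hpol (Pi.single 0 1 : Fin d → F) w
      rw [hLw, euclProd_single, euclProd_comm, euclProd_single] at h1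
      rw [h1, hw0, mul_zero]
    intro p q
    have h := respects_of_single L hu (p - q)
    constructor
    · intro hp i hi
      have h1 : L (p - q) i = 0 :=
        h.mp (fun j hj => by simp [sub_eq_zero.2 (hp j hj)]) i hi
      have h2 : (A p - A q) i = 0 := by rw [hdiff]; exact h1
      simpa [sub_eq_zero] using h2
    · intro hp i hi
      have h1 : ∀ j, j ≠ (0 : Fin d) → L (p - q) j = 0 := by
        intro j hj
        have h2 : (A p - A q) j = 0 := by simp [sub_eq_zero.2 (hp j hj)]
        rw [hdiff] at h2; exact h2
      have := h.mpr h1 i hi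
      simpa [sub_eq_zero] using this
  · rintro ⟨hE, hR⟩
    refine ⟨hE, hE.1, ?_⟩
    obtain ⟨⟨L, t, hA⟩, a, ha⟩ := hE
    have hdiff : ∀ p q : Fin d → F, A p - A q = L (p - q) := by
      intro p q; rw [hA, hA, map_sub]; abel
    have hQ : ∀ v : Fin d → F, euclProd (L v) (L v) = a * euclProd v v := by
      intro v
      have h := ha v 0
      simpa [sqDist, hdiff v 0] using h
    have hpol := polar (fun v => L v) (fun v w => by simp only [map_add]) a hQ
    have hu : ∀ i : Fin d, i ≠ 0 → L (Pi.single 0 1 : Fin d → F) i = 0 := by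
      intro i hi
      have h1 : RestRel (A (Pi.single 0 1)) (A 0) :=
        (hR (Pi.single 0 1) 0).mp (fun j hj => by simp [Pi.single_apply, Ne.symm hj])
      have h2 : (A (Pi.single 0 1) - A 0) i = 0 := by simp [h1 i hi]
      rw [hdiff] at h2; simpa using h2
    have hu0 : L (Pi.single 0 1 : Fin d → F) 0 ≠ 0 := by
      intro h0
      have hu' : L (Pi.single 0 1 : Fin d → F) = 0 := by
        funext j
        by_cases hj : j = 0
        · subst hj; exact h0
        · exact hu j hj
      have he : (Pi.single 0 1 : Fin d → F) = 0 := by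
        apply L.injective; simpa using hu'
      have := congrFun he 0
      simp [Pi.single_apply] at this
    refine ⟨a, fun p q hpq => ⟨?_, ha p q⟩⟩
    have hueq : L (Pi.single 0 1 : Fin d → F)
        = L (Pi.single 0 1 : Fin d → F) 0 • (Pi.single 0 1 : Fin d → F) := by
      funext j
      by_cases hj : j = 0
      · subst hj; simp
      · simp [Pi.single_apply, hj, hu j hj]
    have h1 := hpol (p - q) (Pi.single 0 1 : Fin d → F)
    rw [hueq, euclProd_smul_right, euclProd_single, euclProd_single] at h1
    have hv0 : (p - q) 0 = 0 := by simp [sub_eq_zero.2 hpq]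
    rw [hv0, mul_zero] at h1
    have h2 : L (p - q) 0 = 0 :=
      (mul_eq_zero.mp h1).resolve_left hu0
    have h3 : (A p - A q) 0 = 0 := by rw [hdiff]; exact h2
    have := sub_eq_zero.mp (by simpa using h3)
    exact this

end Spacetimes
end Main

namespace Spacetimes
variable {F : Type*} [Field F] [LinearOrder F] [IsStrictOrderedRing F] {d : ℕ}
/-- the maps that are both Euclidean and Galilean similarities
are exactly the trivial Euclidean similarities. -/
theorem euclSim_and_galSim_iff_trivEuclSim [NeZero d] (hd : 2 ≤ d)
    (A : (Fin d → F) → (Fin d → F)) :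
    (EuclSim A ∧ GalSim A) ↔ TrivEuclSim A := by
  exact euclSim_and_galSim_iff_trivEuclSim' hd A

end Spacetimes
end

section
/- The square-factor a of any Euclidean similarity satisfies a > 0. The square-factor a of any Poincaré similarity satisfies a ≠ 0; moreover, if d > 2, then the square-factor of any Poincaré similarity satisfies a > 0. -/
namespace Spacetimes

open Finset

variable {F : Type*} [Field F] [LinearOrder F] [IsStrictOrderedRing F] {d : ℕ}

private lemma affine_key (B : (Fin d → F) → (Fin d → F) → F)
    {A : (Fin d → F) → (Fin d → F)} {a : F} (hA : IsAffine A)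
    (h : ∀ p q, sqDist B (A p) (A q) = a * sqDist B p q) :
    ∃ L : (Fin d → F) ≃ₗ[F] (Fin d → F), ∀ v : Fin d → F, B (L v) (L v) = a * B v v := by
  obtain ⟨L, t, hL⟩ := hA
  refine ⟨L, fun v => ?_⟩
  have := h v 0
  simpa [sqDist, hL] using this

private lemma euclProd_self_pos {v : Fin d → F} (hv : v ≠ 0) : 0 < euclProd v v := by
  obtain ⟨i, hi⟩ := Function.ne_iff.mp hv
  refine Finset.sum_pos' (fun j _ => mul_self_nonneg _) ⟨i, Finset.mem_univ i, ?_⟩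
  exact mul_self_pos.mpr (by simpa using hi)

private lemma minkProd_single [NeZero d] {i j : Fin d} (hi : i ≠ 0) (hj : j ≠ 0) :
    minkProd (Pi.single i (1:F)) (Pi.single j 1) = if i = j then -1 else 0 := by
  rcases eq_or_ne i j with h | h
  · subst h
    simp [minkProd, Pi.single_apply, hi.symm, mul_ite, ite_mul,
      Finset.sum_ite_eq, Finset.mem_erase, hi]
  · simp [minkProd, Pi.single_apply, hi.symm, hj.symm, h, h.symm, mul_ite, ite_mul,
      Finset.sum_ite_eq, Finset.mem_erase, hi]

private lemma minkProd_single0 [NeZero d] :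
    minkProd (Pi.single (0 : Fin d) (1:F)) (Pi.single 0 1) = 1 := by
  simp [minkProd, Pi.single_apply, Finset.sum_ite_eq, Finset.mem_erase]

private lemma minkProd_expand [NeZero d] (u v : Fin d → F) :
    minkProd (u + v) (u + v) = minkProd u u + 2 * minkProd u v + minkProd v v := by
  have h1 : ∀ i ∈ Finset.univ.erase (0 : Fin d),
      (u i + v i) * (u i + v i) = u i * u i + 2 * (u i * v i) + v i * v i :=
    fun i _ => by ring
  simp only [minkProd, Pi.add_apply]
  rw [Finset.sum_congr rfl h1, Finset.sum_add_distrib, Finset.sum_add_distrib,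
    ← Finset.mul_sum]
  ring

private lemma mink_a_ne [NeZero d] {A : (Fin d → F) → (Fin d → F)} {a : F}
    (hA : IsAffine A)
    (h : ∀ p q : Fin d → F,
      sqDist minkProd (A p) (A q) = a * sqDist minkProd p q) : a ≠ 0 := by
  intro ha
  obtain ⟨L, key⟩ := affine_key minkProd hA h
  have h1 := key (L.symm (Pi.single 0 1))
  rw [L.apply_symm_apply, minkProd_single0, ha, zero_mul] at h1
  exact one_ne_zero h1


/-- the square-factor of a Euclidean similarity is positive;
the square-factor of a Poincaré similarity is non-zero, and positive when
`d > 2`. -/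
theorem square_factor_sign [NeZero d] (hd : 2 ≤ d) :
    (∀ (A : (Fin d → F) → (Fin d → F)) (a : F), IsAffine A →
      (∀ p q : Fin d → F,
        sqDist euclProd (A p) (A q) = a * sqDist euclProd p q) → 0 < a) ∧
    (∀ (A : (Fin d → F) → (Fin d → F)) (a : F), IsAffine A →
      (∀ p q : Fin d → F,
        sqDist minkProd (A p) (A q) = a * sqDist minkProd p q) → a ≠ 0) ∧
    (2 < d → ∀ (A : (Fin d → F) → (Fin d → F)) (a : F), IsAffine A →
      (∀ p q : Fin d → F,
        sqDist minkProd (A p) (A q) = a * sqDist minkProd p q) → 0 < a) := by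
  refine ⟨?_, fun A a hA h => mink_a_ne hA h, ?_⟩
  · intro A a hA h
    obtain ⟨L, key⟩ := affine_key euclProd hA h
    have hv : (Pi.single (0 : Fin d) (1:F) : Fin d → F) ≠ 0 := by
      intro hc
      simpa using congrFun hc (0 : Fin d)
    have h1 := key (Pi.single 0 1)
    have hE : euclProd (Pi.single (0 : Fin d) (1:F)) (Pi.single 0 1) = 1 := by
      simp [euclProd, Pi.single_apply, mul_ite, ite_mul, Finset.sum_ite_eq]
    have hLv : (L (Pi.single 0 1) : Fin d → F) ≠ 0 := by
      simpa using (LinearEquiv.map_ne_zero_iff L).mpr hv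
    have hpos := euclProd_self_pos hLv
    rw [h1, hE, mul_one] at hpos
    exact hpos
  · intro hd2 A a hA h
    have hane : a ≠ 0 := mink_a_ne hA h
    rcases hane.lt_or_gt with hneg | hpos
    · exfalso
      obtain ⟨L, key⟩ := affine_key minkProd hA h
      set i1 : Fin d := ⟨1, by omega⟩ with hi1def
      set i2 : Fin d := ⟨2, by omega⟩ with hi2def
      have hi1 : i1 ≠ 0 := by simp [hi1def, Fin.ext_iff]
      have hi2 : i2 ≠ 0 := by simp [hi2def, Fin.ext_iff]
      have h12 : i1 ≠ i2 := by simp [hi1def, hi2def, Fin.ext_iff]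
      set u := L.symm (Pi.single i1 (1:F)) with hu_def
      set v := L.symm (Pi.single i2 (1:F)) with hv_def
      have hu : a * minkProd u u = -1 := by
        have := key u
        rw [hu_def, L.apply_symm_apply, minkProd_single hi1 hi1, if_pos rfl] at this
        linarith
      have hv : a * minkProd v v = -1 := by
        have := key v
        rw [hv_def, L.apply_symm_apply, minkProd_single hi2 hi2, if_pos rfl] at this
        linarith
      have huv : a * minkProd (u + v) (u + v) = -2 := by
        have := key (u + v)
        rw [map_add, hu_def, hv_def, L.apply_symm_apply, L.apply_symm_apply,
          minkProd_expand, minkProd_single hi1 hi1, minkProd_single hi1 hi2,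
          minkProd_single hi2 hi2, if_pos rfl, if_neg h12, if_pos rfl] at this
        linarith
      have hB : minkProd u v = 0 := by
        rw [minkProd_expand, mul_add, mul_add, hu, hv] at huv
        have : a * minkProd u v = 0 := by linarith
        rcases mul_eq_zero.mp this with h' | h'
        · exact absurd h' hane
        · exact h'
      have hQu : 0 < minkProd u u := by nlinarith
      have hQv : 0 < minkProd v v := by nlinarith
      simp only [minkProd] at hQu hQv hB
      set S := Finset.univ.erase (0 : Fin d) with hS
      have CS := Finset.sum_mul_sq_le_sq_mul_sq S u v
      have e1 : ∑ i ∈ S, u i ^ 2 = ∑ i ∈ S, u i * u i :=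
        Finset.sum_congr rfl fun i _ => pow_two (u i)
      have e2 : ∑ i ∈ S, v i ^ 2 = ∑ i ∈ S, v i * v i :=
        Finset.sum_congr rfl fun i _ => pow_two (v i)
      have hsu : (0:F) ≤ ∑ i ∈ S, u i * u i :=
        Finset.sum_nonneg fun i _ => mul_self_nonneg _
      have hsv : (0:F) ≤ ∑ i ∈ S, v i * v i :=
        Finset.sum_nonneg fun i _ => mul_self_nonneg _
      rw [e1, e2] at CS
      have hlt1 : ∑ i ∈ S, u i * u i < u 0 * u 0 := by linarith
      have hlt2 : ∑ i ∈ S, v i * v i < v 0 * v 0 := by linarith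
      have heq : u 0 * v 0 = ∑ i ∈ S, u i * v i := by linarith
      have hfin : u 0 * u 0 * (v 0 * v 0) ≤
          (∑ i ∈ S, u i * u i) * ∑ i ∈ S, v i * v i := by
        calc u 0 * u 0 * (v 0 * v 0) = (u 0 * v 0) ^ 2 := by ring
          _ = (∑ i ∈ S, u i * v i) ^ 2 := by rw [heq]
          _ ≤ _ := CS
      linarith [mul_lt_mul'' hlt1 hlt2 hsu hsv, hfin]
    · exact hpos

end Spacetimes
end
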